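/- For the scalar equation ẋ(t) = x(t-τ), x ≡ 1 on [-1,0], with cost j(τ) = ½∫₀¹(x[τ](t) - x_d(t))² dt and x_d(t) = eᵗ + 1: at τ = 0 the state is x[0](t) = eᵗ, the linearized state solves ẇ = w - eᵗ, w(0) = 0, giving x'[0](t) = -t eᵗ, and j'(0) = ∫₀¹(eᵗ - (1+eᵗ))(-t eᵗ) dt = ∫₀¹ t eᵗ dt = 1 > 0; hence τ = 0 is a strict local minimizer of j on [0,1]. -/

import Mathlib

open Set MeasureTheory

lemma aux_const_of_deriv_zero (f : ℝ → ℝ) (hc : ContinuousOn f (Icc 0 1))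
    (hd : ∀ t ∈ Ioo (0:ℝ) 1, HasDerivAt f 0 t) :
    ∀ t ∈ Icc (0:ℝ) 1, f t = f 0 := by
  have hdiff : DifferentiableOn ℝ f (interior (Icc (0:ℝ) 1)) := by
    rw [interior_Icc]
    exact fun x hx => ((hd x hx).differentiableAt).differentiableWithinAt
  have hder : ∀ x ∈ interior (Icc (0:ℝ) 1), deriv f x = 0 := by
    rw [interior_Icc]; exact fun x hx => (hd x hx).deriv
  have h1 : MonotoneOn f (Icc 0 1) :=
    monotoneOn_of_deriv_nonneg (convex_Icc 0 1) hc hdiff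
      (fun x hx => le_of_eq (hder x hx).symm)
  have h2 : AntitoneOn f (Icc 0 1) :=
    antitoneOn_of_deriv_nonpos (convex_Icc 0 1) hc hdiff
      (fun x hx => le_of_eq (hder x hx))
  intro t ht
  have h0 : (0:ℝ) ∈ Icc (0:ℝ) 1 := ⟨le_rfl, zero_le_one⟩
  exact le_antisymm (h2 h0 ht ht.1) (h1 h0 ht ht.1)

/-- for `ẋ(t) = x(t-τ)`, `x ≡ 1` on `[-1,0]`, `x_d(t) = eᵗ + 1`,
`j(τ) = ½∫₀¹(x[τ]-x_d)²`: at `τ = 0` one has `x[0](t) = eᵗ`, the linearized state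
`x'[0]` solves `ẇ = w - eᵗ`, `w(0) = 0`, giving `x'[0](t) = -t eᵗ`, and
`j'(0) = ∫₀¹ t eᵗ dt = 1 > 0`; hence `τ = 0` is a strict local minimizer of `j` on `[0,1]`. -/
theorem example_tau_zero_minimizer
    (X : ℝ → ℝ → ℝ)
    (hX : ∀ τ ∈ Icc (0:ℝ) 1, ContinuousOn (X τ) (Icc (-1) 1) ∧
      (∀ t ∈ Icc (-1:ℝ) 0, X τ t = 1) ∧
      (∀ t ∈ Ioo (0:ℝ) 1, HasDerivAt (X τ) (X τ (t - τ)) t))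
    -- the linearized state at τ = 0 : ẇ(t) = w(t) - ẋ[0](t) = w(t) - x[0](t), w(0)=0
    (W0 : ℝ → ℝ)
    (hW0c : ContinuousOn W0 (Icc 0 1)) (hW00 : W0 0 = 0)
    (hW0 : ∀ t ∈ Ioo (0:ℝ) 1, HasDerivAt W0 (W0 t - X 0 t) t)
    (j j' : ℝ → ℝ)
    (hj : ∀ τ, j τ = (1/2) * ∫ t in Ioo (0:ℝ) 1, (X τ t - (Real.exp t + 1))^2)
    (hj' : ∀ τ ∈ Icc (0:ℝ) 1, HasDerivWithinAt j (j' τ) (Icc 0 1) τ)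
    (hj'c : ContinuousOn j' (Icc 0 1))
    (hj'form : j' 0 = ∫ t in Ioo (0:ℝ) 1, (X 0 t - (Real.exp t + 1)) * W0 t) :
    (∀ t ∈ Icc (0:ℝ) 1, X 0 t = Real.exp t) ∧
    (∀ t ∈ Icc (0:ℝ) 1, W0 t = -t * Real.exp t) ∧
    j' 0 = 1 ∧ 0 < j' 0 ∧
    (∃ ε > (0:ℝ), ∀ τ ∈ Icc (0:ℝ) 1, τ ≠ 0 → |τ| < ε → j 0 < j τ) := by
  obtain ⟨hXc, hXb, hXd⟩ := hX 0 ⟨le_rfl, zero_le_one⟩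
  have hX00 : X 0 0 = 1 := hXb 0 ⟨by norm_num, le_rfl⟩
  -- helper : derivative of exp(-t)
  have hexp : ∀ t : ℝ, HasDerivAt (fun s => Real.exp (-s)) (-Real.exp (-t)) t := by
    intro t
    have := (Real.hasDerivAt_exp (-t)).comp t (hasDerivAt_neg t)
    simp [mul_comm] at this
    exact this
  -- Part 1 : X 0 t = exp t
  have part1 : ∀ t ∈ Icc (0:ℝ) 1, X 0 t = Real.exp t := by
    have hgc : ContinuousOn (fun t => X 0 t * Real.exp (-t)) (Icc 0 1) :=
      (hXc.mono (Icc_subset_Icc (by norm_num) le_rfl)).mul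
        (Real.continuous_exp.comp continuous_neg).continuousOn
    have hgd : ∀ t ∈ Ioo (0:ℝ) 1, HasDerivAt (fun t => X 0 t * Real.exp (-t)) 0 t := by
      intro t ht
      have h1 := hXd t ht
      rw [sub_zero] at h1
      have := h1.mul (hexp t)
      refine this.congr_deriv (Eq.symm ?_)
      ring
    have hconst := aux_const_of_deriv_zero _ hgc hgd
    intro t ht
    have := hconst t ht
    simp only [hX00, neg_zero, Real.exp_zero, one_mul] at this
    have hne : Real.exp (-t) ≠ 0 := Real.exp_ne_zero _
    have : X 0 t = (Real.exp (-t))⁻¹ := by field_simp at this ⊢; linarith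
    rw [this, Real.exp_neg, inv_inv]
  -- Part 2 : W0 t = -t * exp t
  have part2 : ∀ t ∈ Icc (0:ℝ) 1, W0 t = -t * Real.exp t := by
    have hgc : ContinuousOn (fun t => W0 t * Real.exp (-t) + t) (Icc 0 1) :=
      (hW0c.mul (Real.continuous_exp.comp continuous_neg).continuousOn).add
        continuous_id.continuousOn
    have hgd : ∀ t ∈ Ioo (0:ℝ) 1,
        HasDerivAt (fun t => W0 t * Real.exp (-t) + t) 0 t := by
      intro t ht
      have h1 := (hW0 t ht).mul (hexp t)
      have h2 := h1.add (hasDerivAt_id t)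
      have hx := part1 t ⟨ht.1.le, ht.2.le⟩
      refine h2.congr_deriv (Eq.symm ?_)
      have hEE : Real.exp t * Real.exp (-t) = 1 := by rw [← Real.exp_add]; simp
      rw [hx]
      linear_combination hEE
    have hconst := aux_const_of_deriv_zero _ hgc hgd
    intro t ht
    have := hconst t ht
    simp only [hW00, zero_mul, zero_add] at this
    have : W0 t * Real.exp (-t) = -t := by linarith
    have h2 : W0 t = -t * (Real.exp (-t))⁻¹ := by
      field_simp at this ⊢; linarith
    rw [h2, Real.exp_neg, inv_inv]
  -- Part 3 : j' 0 = 1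
  have part3 : j' 0 = 1 := by
    rw [hj'form]
    have hcong : ∀ t ∈ Ioo (0:ℝ) 1,
        (X 0 t - (Real.exp t + 1)) * W0 t = t * Real.exp t := by
      intro t ht
      rw [part1 t ⟨ht.1.le, ht.2.le⟩, part2 t ⟨ht.1.le, ht.2.le⟩]
      ring
    rw [setIntegral_congr_fun measurableSet_Ioo hcong]
    have h1 : (∫ t in Ioo (0:ℝ) 1, t * Real.exp t) =
        ∫ t in (0:ℝ)..1, t * Real.exp t := by
      rw [intervalIntegral.integral_of_le zero_le_one,
        MeasureTheory.integral_Ioc_eq_integral_Ioo]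
    rw [h1]
    have hF : ∀ t ∈ Icc (0:ℝ) 1,
        HasDerivAt (fun t => (t - 1) * Real.exp t) (t * Real.exp t) t := by
      intro t _
      have := ((hasDerivAt_id t).sub_const 1).mul (Real.hasDerivAt_exp t)
      refine this.congr_deriv (Eq.symm ?_)
      simp only [id_eq]
      ring
    rw [intervalIntegral.integral_eq_sub_of_hasDerivAt
      (fun t ht => hF t (by rwa [uIcc_of_le zero_le_one] at ht))
      ((continuous_id.mul Real.continuous_exp).intervalIntegrable 0 1)]
    simp
  have part4 : 0 < j' 0 := by rw [part3]; norm_num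
  refine ⟨part1, part2, part3, part4, ?_⟩
  -- Part 5 : local minimizer
  have h0mem : (0:ℝ) ∈ Icc (0:ℝ) 1 := ⟨le_rfl, zero_le_one⟩
  have hcw : ContinuousWithinAt j' (Icc 0 1) 0 := hj'c 0 h0mem
  have hev : ∀ᶠ τ in nhdsWithin 0 (Icc (0:ℝ) 1), 0 < j' τ :=
    hcw.eventually_const_lt part4
  obtain ⟨U, hUo, hU0, hUsub⟩ := mem_nhdsWithin.mp hev
  obtain ⟨δ, hδpos, hball⟩ := Metric.isOpen_iff.mp hUo 0 hU0
  set ε := min (δ / 2) 1 with hε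
  have hεpos : 0 < ε := lt_min (by linarith) one_pos
  have hε1 : ε ≤ 1 := min_le_right _ _
  have hpos : ∀ x ∈ Icc (0:ℝ) ε, 0 < j' x := by
    intro x hx
    apply hUsub
    constructor
    · apply hball
      rw [Metric.mem_ball, Real.dist_eq, sub_zero, abs_of_nonneg hx.1]
      calc x ≤ ε := hx.2
        _ ≤ δ / 2 := min_le_left _ _
        _ < δ := by linarith
    · exact ⟨hx.1, hx.2.trans hε1⟩
  have hsub : Icc (0:ℝ) ε ⊆ Icc 0 1 := Icc_subset_Icc le_rfl hε1
  have hmono : StrictMonoOn j (Icc 0 ε) := by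
    apply strictMonoOn_of_deriv_pos (convex_Icc 0 ε)
    · exact fun x hx => ((hj' x (hsub hx)).continuousWithinAt).mono hsub
    · intro x hx
      rw [interior_Icc] at hx
      have hx1 : x ∈ Ioo (0:ℝ) 1 := ⟨hx.1, lt_of_lt_of_le hx.2 hε1⟩
      have hnhds : Icc (0:ℝ) 1 ∈ nhds x :=
        Icc_mem_nhds (by linarith [hx1.1]) (by linarith [hx1.2])
      have hda : HasDerivAt j (j' x) x :=
        (hj' x (hsub ⟨hx.1.le, hx.2.le⟩)).hasDerivAt hnhds
      rw [hda.deriv]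
      exact hpos x ⟨hx.1.le, hx.2.le⟩
  refine ⟨ε, hεpos, fun τ hτ hτ0 hτε => ?_⟩
  have hτpos : 0 < τ := lt_of_le_of_ne hτ.1 (Ne.symm hτ0)
  have hτlt : τ < ε := by rwa [abs_of_nonneg hτ.1] at hτε
  exact hmono ⟨le_rfl, hεpos.le⟩ ⟨hτpos.le, hτlt.le⟩ hτpos
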